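/- Let f : ℤ × ℤ → ℝ and k, r ≥ 1 integers. Then the discrete trapezoid-type inequality holds: |∑_{t=1}^{k} ∑_{s=1}^{r} f(t,s) - (1/2)[r ∑_{t=1}^{k} (f(t,1) + f(t,r+1)) + k ∑_{s=1}^{r} (f(1,s) + f(k+1,s))] + (1/4) k r [f(1,1) + f(1,r+1) + f(k+1,1) + f(k+1,r+1)]| ≤ (1/4) k r ∑_{t=1}^{k} ∑_{s=1}^{r} |Δ₂Δ₁f(t,s)|, where Δ₂Δ₁f(t,s) = f(t+1,s+1) - f(t+1,s) - f(t,s+1) + f(t,s). -/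

import Mathlib

open Finset

/-- Mixed forward difference operator. -/
def dd (h : ℤ → ℤ → ℝ) (s t : ℤ) : ℝ :=
  h (s + 1) (t + 1) - h (s + 1) t - h s (t + 1) + h s t

lemma icc_insert (a n : ℤ) (h : a ≤ n + 1) :
    Icc a (n + 1) = insert (n + 1) (Icc a n) := by
  ext x; simp only [mem_Icc, mem_insert]; omega

lemma tele (k : ℤ) (hk : 1 ≤ k) (g : ℤ → ℝ) :
    ∑ t ∈ Icc (1:ℤ) k, (g (t+1) - g t) = g (k+1) - g 1 := by
  refine Int.le_induction (motive := fun k _ => ∑ t ∈ Icc (1:ℤ) k, (g (t+1) - g t) = g (k+1) - g 1) ?_ ?_ k hk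
  · simp
  · intro n hn ih
    rw [icc_insert 1 n (by linarith), Finset.sum_insert (by simp), ih]
    ring

lemma oneD (k : ℤ) (hk : 1 ≤ k) (g : ℤ → ℝ) :
    (∑ t ∈ Icc (1:ℤ) k, g t) - (k:ℝ)/2 * (g 1 + g (k+1))
      = ∑ t ∈ Icc (1:ℤ) k, ((k:ℝ)/2 - t) * (g (t+1) - g t) := by
  refine Int.le_induction (motive := fun k _ => (∑ t ∈ Icc (1:ℤ) k, g t) - (k:ℝ)/2 * (g 1 + g (k+1))
      = ∑ t ∈ Icc (1:ℤ) k, ((k:ℝ)/2 - t) * (g (t+1) - g t)) ?_ ?_ k hk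
  · simp; ring
  · intro n hn ih
    rw [icc_insert 1 n (by linarith), Finset.sum_insert (by simp),
        Finset.sum_insert (by simp)]
    have e2 : (∑ t ∈ Icc (1:ℤ) n, ((((n+1:ℤ)):ℝ)/2 - t) * (g (t+1) - g t))
        = (∑ t ∈ Icc (1:ℤ) n, ((n:ℝ)/2 - t) * (g (t+1) - g t))
          + (1/2) * (g (n+1) - g 1) := by
      rw [← tele n hn g, Finset.mul_sum, ← Finset.sum_add_distrib]
      refine Finset.sum_congr rfl fun t _ => by push_cast; ring
    rw [e2, ← ih]
    push_cast
    ring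

lemma kerbound (k t : ℤ) (ht : t ∈ Icc (1:ℤ) k) : |(k:ℝ)/2 - t| ≤ (k:ℝ)/2 := by
  rw [Finset.mem_Icc] at ht
  have h1 : (1:ℝ) ≤ t := by exact_mod_cast ht.1
  have h2 : (t:ℝ) ≤ k := by exact_mod_cast ht.2
  rw [abs_le]; constructor <;> [linarith; linarith]


theorem discrete_trapezoid
    (k r : ℤ) (hk : 1 ≤ k) (hr : 1 ≤ r) (f : ℤ → ℤ → ℝ) :
    |(∑ t ∈ Icc (1 : ℤ) k, ∑ s ∈ Icc (1 : ℤ) r, f t s)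
        - (1 / 2) * ((r : ℝ) * (∑ t ∈ Icc (1 : ℤ) k, (f t 1 + f t (r + 1)))
            + (k : ℝ) * (∑ s ∈ Icc (1 : ℤ) r, (f 1 s + f (k + 1) s)))
        + (1 / 4) * (k : ℝ) * (r : ℝ) *
            (f 1 1 + f 1 (r + 1) + f (k + 1) 1 + f (k + 1) (r + 1))| ≤
      (1 / 4) * (k : ℝ) * (r : ℝ) *
        ∑ t ∈ Icc (1 : ℤ) k, ∑ s ∈ Icc (1 : ℤ) r, |dd f t s| := by
  set A : ℤ → ℝ := fun t => (∑ s ∈ Icc (1:ℤ) r, f t s) - (r:ℝ)/2 * (f t 1 + f t (r+1)) with hA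
  have hAid : ∀ t : ℤ, A t = ∑ s ∈ Icc (1:ℤ) r, ((r:ℝ)/2 - s) * (f t (s+1) - f t s) :=
    fun t => oneD r hr (f t)
  have e1 : (∑ t ∈ Icc (1 : ℤ) k, ∑ s ∈ Icc (1 : ℤ) r, f t s)
        - (1 / 2) * ((r : ℝ) * (∑ t ∈ Icc (1 : ℤ) k, (f t 1 + f t (r + 1)))
            + (k : ℝ) * (∑ s ∈ Icc (1 : ℤ) r, (f 1 s + f (k + 1) s)))
        + (1 / 4) * (k : ℝ) * (r : ℝ) *
            (f 1 1 + f 1 (r + 1) + f (k + 1) 1 + f (k + 1) (r + 1))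
      = (∑ t ∈ Icc (1:ℤ) k, A t) - (k:ℝ)/2 * (A 1 + A (k+1)) := by
    simp only [hA, Finset.sum_sub_distrib, Finset.sum_add_distrib, ← Finset.mul_sum]
    ring
  have e2 : ∀ t : ℤ, A (t+1) - A t = ∑ s ∈ Icc (1:ℤ) r, ((r:ℝ)/2 - s) * dd f t s := by
    intro t
    rw [hAid (t+1), hAid t, ← Finset.sum_sub_distrib]
    exact Finset.sum_congr rfl fun s _ => by simp only [dd]; ring
  have key := oneD k hk A
  rw [e1, key]
  have e3 : (∑ t ∈ Icc (1:ℤ) k, ((k:ℝ)/2 - t) * (A (t+1) - A t))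
      = ∑ t ∈ Icc (1:ℤ) k, ∑ s ∈ Icc (1:ℤ) r,
          ((k:ℝ)/2 - t) * (((r:ℝ)/2 - s) * dd f t s) := by
    refine Finset.sum_congr rfl fun t _ => ?_
    rw [e2 t, Finset.mul_sum]
  rw [e3]
  calc |∑ t ∈ Icc (1:ℤ) k, ∑ s ∈ Icc (1:ℤ) r,
          ((k:ℝ)/2 - t) * (((r:ℝ)/2 - s) * dd f t s)|
      ≤ ∑ t ∈ Icc (1:ℤ) k, |∑ s ∈ Icc (1:ℤ) r,
          ((k:ℝ)/2 - t) * (((r:ℝ)/2 - s) * dd f t s)| := Finset.abs_sum_le_sum_abs _ _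
    _ ≤ ∑ t ∈ Icc (1:ℤ) k, ((1:ℝ)/4 * k * r * ∑ s ∈ Icc (1:ℤ) r, |dd f t s|) := by
        refine Finset.sum_le_sum fun t ht => ?_
        calc |∑ s ∈ Icc (1:ℤ) r, ((k:ℝ)/2 - t) * (((r:ℝ)/2 - s) * dd f t s)|
            ≤ ∑ s ∈ Icc (1:ℤ) r, |((k:ℝ)/2 - t) * (((r:ℝ)/2 - s) * dd f t s)| :=
              Finset.abs_sum_le_sum_abs _ _
          _ ≤ ∑ s ∈ Icc (1:ℤ) r, (1:ℝ)/4 * k * r * |dd f t s| := by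
              refine Finset.sum_le_sum fun s hs => ?_
              rw [abs_mul, abs_mul]
              have hk2 : (0:ℝ) ≤ (k:ℝ)/2 := by positivity
              have h1 := kerbound k t ht
              have h2 := kerbound r s hs
              have : |(k:ℝ)/2 - t| * (|(r:ℝ)/2 - s| * |dd f t s|) ≤
                  ((k:ℝ)/2) * (((r:ℝ)/2) * |dd f t s|) := by
                gcongr
              have e : ((k:ℝ)/2) * (((r:ℝ)/2) * |dd f t s|)
                  = (1:ℝ)/4 * k * r * |dd f t s| := by ring
              linarith [this]
          _ = (1:ℝ)/4 * k * r * ∑ s ∈ Icc (1:ℤ) r, |dd f t s| := by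
              rw [← Finset.mul_sum]
    _ = (1:ℝ)/4 * k * r * ∑ t ∈ Icc (1:ℤ) k, ∑ s ∈ Icc (1:ℤ) r, |dd f t s| := by
        rw [← Finset.mul_sum]
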